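/- Let T_GS : ℝⁿ → ℝⁿ be a sup-norm γ-contraction (0 < γ < 1) that is order-monotone, with fixed point U*. Define β_k = 1/(∑_{i=0}^k γ^{-2i}) and U^k = β_k U^0 + (1−β_k) T_GS U^{k−1}. If U^0 ≤ T_GS U^0 componentwise, then for all k, U^0 ≤ U* and ‖T_GS U^k − U^k‖_∞ ≤ ((γ⁻¹ − γ)(1 + γ − γ^(k+1)))/((γ^(k+1))⁻¹ − γ^(k+1)) · ‖U^0 − U*‖_∞, provided additionally that for all α ∈ [0,1] and U, Ṽ there exists a nonnegative matrix P with row sums ≤ γ such that T_GS U − (1−α) T_GS Ṽ − α T_GS U* ≤ P (U − (1−α) Ṽ − α U*). -/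

import Mathlib

noncomputable def auxB (γ : ℝ) (k : ℕ) : ℝ := γ^(2*k) * (1 - γ^2) / (1 - γ^(2*k+2))
noncomputable def auxM (γ : ℝ) (k : ℕ) : ℝ := γ^k * ((1-γ^2)*(1+γ)*(1-γ^k)) / (1 - γ^(2*k+2))

lemma auxB_eq {γ : ℝ} (h0 : 0 < γ) (h1 : γ < 1) (k : ℕ) :
    (∑ i ∈ Finset.range (k+1), (γ^(2*i))⁻¹)⁻¹ = auxB γ k := by
  have hγne : γ ≠ 0 := ne_of_gt h0
  have hg2 : (0:ℝ) < γ^2 := by positivity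
  have hg2lt : γ^2 < 1 := pow_lt_one₀ h0.le h1 (by omega)
  have hxne : (γ^2)⁻¹ ≠ 1 := by
    have : 1 < (γ^2)⁻¹ := (one_lt_inv₀ hg2).mpr hg2lt
    exact this.ne'
  have h1' : ∑ i ∈ Finset.range (k+1), (γ^(2*i))⁻¹
      = ∑ i ∈ Finset.range (k+1), ((γ^2)⁻¹)^i := by
    refine Finset.sum_congr rfl fun i _ => ?_
    rw [pow_mul, inv_pow]
  have e1 : γ^(2*k) = (γ^k)^2 := pow_mul' γ 2 k
  have e2 : γ^(2*k+2) = (γ^k)^2 * γ^2 := by rw [pow_add, e1]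
  have e3 : ((γ^2)⁻¹)^(k+1) = ((γ^k)^2 * γ^2)⁻¹ := by
    rw [inv_pow, pow_succ, ← pow_mul, pow_mul']
  rw [h1', geom_sum_eq hxne, auxB, inv_div, e1, e2, e3]
  have hak : 0 < γ^k := pow_pos h0 k
  have hak1 : γ^k ≤ 1 := pow_le_one₀ h0.le h1.le
  generalize γ^k = a at *
  have ha2 : a^2 ≤ 1 := by nlinarith
  have hlt : a^2*γ^2 < 1 := by nlinarith
  have hd1 : (1:ℝ) - a^2*γ^2 ≠ 0 := by linarith
  have hd2 : (a^2*γ^2)⁻¹ - 1 ≠ 0 := by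
    have : 1 < (a^2*γ^2)⁻¹ := (one_lt_inv₀ (by positivity)).mpr hlt
    linarith
  field_simp

lemma aux_facts {γ : ℝ} (h0 : 0 < γ) (h1 : γ < 1) (k : ℕ) :
    0 < auxB γ k ∧ auxB γ k ≤ 1 ∧ 0 ≤ auxM γ k ∧
    0 ≤ (1 - auxB γ (k+1)) * auxB γ k - auxB γ (k+1) ∧
    auxM γ (k+1) = γ*(1-auxB γ (k+1))*auxM γ k
        + γ*((1-auxB γ (k+1))*auxB γ k - auxB γ (k+1)) ∧
    auxM γ k + auxB γ k
      = ((γ⁻¹-γ)*(1+γ-γ^(k+1)))/((γ^(k+1))⁻¹-γ^(k+1)) ∧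
    auxB γ (k+1) ≤ auxB γ k := by
  have hγne : γ ≠ 0 := ne_of_gt h0
  have e1 : γ^(2*k) = (γ^k)^2 := pow_mul' γ 2 k
  have e2 : γ^(2*k+2) = (γ^k)^2 * γ^2 := by rw [pow_add, e1]
  have e3 : γ^(2*(k+1)) = (γ^k)^2 * γ^2 := by rw [← e2]; ring_nf
  have e4 : γ^(2*(k+1)+2) = (γ^k)^2 * γ^4 := by
    have h : 2*(k+1)+2 = 2*k+4 := by ring
    rw [h, pow_add, e1]
  have e5 : γ^(k+1) = γ^k * γ := pow_succ γ k
  have hak : 0 < γ^k := pow_pos h0 k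
  have hak1 : γ^k ≤ 1 := pow_le_one₀ h0.le h1.le
  simp only [auxB, auxM, e1, e2, e3, e4, e5]
  generalize γ^k = a at *
  have ha2 : a^2 ≤ 1 := by nlinarith
  have hg2 : (0:ℝ) < γ^2 := by positivity
  have hg2lt : γ^2 < 1 := by nlinarith
  have hg4lt : γ^4 < 1 := by nlinarith
  have hlt1 : a^2*γ^2 < 1 := by nlinarith
  have hlt2 : a^2*γ^4 < 1 := by nlinarith
  have hd1 : (0:ℝ) < 1 - a^2*γ^2 := by linarith
  have hd2 : (0:ℝ) < 1 - a^2*γ^4 := by linarith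
  have hag : 0 < a * γ := by positivity
  have haglt : a * γ < 1 := by nlinarith
  have hd3 : (0:ℝ) < (a*γ)⁻¹ - a*γ := by
    have : 1 < (a*γ)⁻¹ := (one_lt_inv₀ hag).mpr haglt
    nlinarith
  refine ⟨div_pos (mul_pos (by positivity) (by linarith)) hd1, ?_, ?_, ?_, ?_, ?_, ?_⟩
  · rw [div_le_one hd1]; nlinarith
  · apply div_nonneg _ hd1.le
    have h1' : (0:ℝ) ≤ 1 - γ^2 := by linarith
    have h2' : (0:ℝ) ≤ 1 + γ := by linarith
    have h3' : (0:ℝ) ≤ 1 - a := by linarith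
    have := mul_nonneg (mul_nonneg h1' h2') h3'
    nlinarith
  · have key : (1 - a^2*γ^2*(1-γ^2)/(1-a^2*γ^4)) * (a^2*(1-γ^2)/(1-a^2*γ^2))
        - a^2*γ^2*(1-γ^2)/(1-a^2*γ^4) = a^2*(1-γ^2)^2/(1-a^2*γ^4) := by
      field_simp
      ring
    rw [key]
    positivity
  · field_simp
    ring
  · rw [div_add_div _ _ (ne_of_gt hd1) (ne_of_gt hd1), div_eq_div_iff (by positivity) (ne_of_gt hd3)]
    field_simp
    ring
  · rw [div_le_div_iff₀ hd2 hd1]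
    nlinarith [mul_nonneg (sq_nonneg a) (sq_nonneg (1-γ^2))]

theorem stmt_19 (n : ℕ) (hn : 0 < n) (γ : ℝ) (hγ0 : 0 < γ) (hγ1 : γ < 1)
    (TGS : (Fin n → ℝ) → (Fin n → ℝ))
    (hT : ∀ x y : Fin n → ℝ, ‖TGS x - TGS y‖ ≤ γ * ‖x - y‖)
    (hmono : ∀ x y : Fin n → ℝ, x ≤ y → TGS x ≤ TGS y)
    (Ustar : Fin n → ℝ) (hfix : TGS Ustar = Ustar)
    (β : ℕ → ℝ) (hβ : ∀ k, β k = (∑ i ∈ Finset.range (k+1), (γ^(2*i))⁻¹)⁻¹)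
    (U : ℕ → Fin n → ℝ)
    (hU : ∀ k : ℕ, U (k+1) = β (k+1) • U 0 + (1 - β (k+1)) • TGS (U k))
    (h0 : U 0 ≤ TGS (U 0))
    (hlin : ∀ α : ℝ, 0 ≤ α → α ≤ 1 → ∀ V Vt : Fin n → ℝ,
      ∃ P : Matrix (Fin n) (Fin n) ℝ,
        (∀ l m, 0 ≤ P l m) ∧ (∀ l, ∑ m, P l m ≤ γ) ∧
        TGS V - (1 - α) • TGS Vt - α • TGS Ustar
          ≤ P.mulVec (V - (1 - α) • Vt - α • Ustar)) :
    U 0 ≤ Ustar ∧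
    ∀ k : ℕ,
      ‖TGS (U k) - U k‖
        ≤ ((γ⁻¹ - γ) * (1 + γ - γ^(k+1))) / ((γ^(k+1))⁻¹ - γ^(k+1))
            * ‖U 0 - Ustar‖ := by
  have hβc : ∀ k, β k = auxB γ k := fun k => by rw [hβ k, auxB_eq hγ0 hγ1]
  have hBpos : ∀ k, 0 < β k := fun k => by rw [hβc]; exact (aux_facts hγ0 hγ1 k).1
  have hBle1 : ∀ k, β k ≤ 1 := fun k => by rw [hβc]; exact (aux_facts hγ0 hγ1 k).2.1
  have hMnn : ∀ k, 0 ≤ auxM γ k := fun k => (aux_facts hγ0 hγ1 k).2.2.1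
  have hcnn : ∀ k, 0 ≤ (1 - β (k+1)) * β k - β (k+1) := fun k => by
    rw [hβc, hβc]; exact (aux_facts hγ0 hγ1 k).2.2.2.1
  have hrec : ∀ k, auxM γ (k+1) = γ*(1-β (k+1))*auxM γ k
      + γ*((1-β (k+1))*β k - β (k+1)) := fun k => by
    rw [hβc, hβc]; exact (aux_facts hγ0 hγ1 k).2.2.2.2.1
  have hanti : ∀ k, β (k+1) ≤ β k := fun k => by
    rw [hβc, hβc]; exact (aux_facts hγ0 hγ1 k).2.2.2.2.2.2
  set C := ‖U 0 - Ustar‖ with hC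
  have hCnn : 0 ≤ C := norm_nonneg _
  -- Part 1 : U 0 ≤ Ustar
  have hstar : U 0 ≤ Ustar := by
    obtain ⟨P, hP0, hPr, hPle⟩ := hlin 0 le_rfl zero_le_one (U 0) Ustar
    simp only [sub_zero, one_smul, zero_smul, hfix] at hPle
    by_contra hcon
    obtain ⟨i0, -, hmax⟩ := Finset.univ.exists_max_image
      (fun i => U 0 i - Ustar i) ⟨⟨0, hn⟩, Finset.mem_univ _⟩
    rw [Pi.le_def] at hcon
    push_neg at hcon
    obtain ⟨j, hj⟩ := hcon
    have hM : 0 < U 0 i0 - Ustar i0 := by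
      have := hmax j (Finset.mem_univ j); linarith
    have hx : U 0 i0 - Ustar i0 ≤ ∑ m, P i0 m * (U 0 m - Ustar m) := by
      have h1 := hPle i0
      simp only [Pi.sub_apply, Matrix.mulVec, dotProduct] at h1
      have h2 := h0 i0
      linarith
    have hx2 : ∑ m, P i0 m * (U 0 m - Ustar m) ≤ (∑ m, P i0 m) * (U 0 i0 - Ustar i0) := by
      rw [Finset.sum_mul]
      refine Finset.sum_le_sum fun m _ => ?_
      exact mul_le_mul_of_nonneg_left (hmax m (Finset.mem_univ m)) (hP0 i0 m)
    have hx3 : (∑ m, P i0 m) * (U 0 i0 - Ustar i0) ≤ γ * (U 0 i0 - Ustar i0) :=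
      mul_le_mul_of_nonneg_right (hPr i0) hM.le
    nlinarith
  -- Part 2 : order facts
  have hkey : ∀ k, (U 0 ≤ U k) ∧ (U k ≤ TGS (U k)) ∧ (U k ≤ Ustar) ∧ (U k ≤ U (k+1)) := by
    intro k
    induction k with
    | zero =>
      refine ⟨le_rfl, h0, hstar, ?_⟩
      intro i
      rw [hU 0]
      simp only [Pi.add_apply, Pi.smul_apply, smul_eq_mul]
      have h0i := h0 i
      have h1 := hBle1 1
      have h2 := hBpos 1
      nlinarith [mul_nonneg (by linarith : (0:ℝ) ≤ 1 - β 1) (by linarith : (0:ℝ) ≤ TGS (U 0) i - U 0 i)]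
    | succ k ih =>
      obtain ⟨hA, hB, hCk, hD⟩ := ih
      have hTmono := hmono _ _ hD
      have hTstar : TGS (U k) ≤ Ustar := by rw [← hfix]; exact hmono _ _ hCk
      have hU0T : U 0 ≤ TGS (U k) := le_trans hA hB
      have hb1 := hBpos (k+1); have hb2 := hBle1 (k+1)
      have hb3 := hBpos (k+2); have hb4 := hBle1 (k+2)
      have hb5 := hanti (k+1)
      refine ⟨le_trans hA hD, ?_, ?_, ?_⟩
      · have h1 : U (k+1) ≤ TGS (U k) := by
          intro i
          rw [hU k]
          simp only [Pi.add_apply, Pi.smul_apply, smul_eq_mul]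
          have := hU0T i
          nlinarith [mul_nonneg hb1.le (by linarith : (0:ℝ) ≤ TGS (U k) i - U 0 i)]
        exact le_trans h1 hTmono
      · intro i
        rw [hU k]
        simp only [Pi.add_apply, Pi.smul_apply, smul_eq_mul]
        have h1 := hstar i
        have h2 := hTstar i
        nlinarith [mul_nonneg hb1.le (by linarith : (0:ℝ) ≤ Ustar i - U 0 i),
          mul_nonneg (by linarith : (0:ℝ) ≤ 1 - β (k+1)) (by linarith : (0:ℝ) ≤ Ustar i - TGS (U k) i)]
      · intro i
        have h1 := hU0T i
        have h2 := hTmono i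
        rw [hU (k+1)]
        simp only [Pi.add_apply, Pi.smul_apply, smul_eq_mul]
        conv_lhs => rw [hU k]
        simp only [Pi.add_apply, Pi.smul_apply, smul_eq_mul]
        nlinarith [mul_nonneg (by linarith : (0:ℝ) ≤ β (k+1) - β (k+2)) (by linarith : (0:ℝ) ≤ TGS (U k) i - U 0 i),
          mul_nonneg (by linarith : (0:ℝ) ≤ 1 - β (k+2)) (by linarith : (0:ℝ) ≤ TGS (U (k+1)) i - TGS (U k) i)]
  -- w facts
  have hw : ∀ i, 0 ≤ Ustar i - U 0 i := fun i => by have := hstar i; linarith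
  have hwC : ∀ i, Ustar i - U 0 i ≤ C := by
    intro i
    have h1 := norm_le_pi_norm (U 0 - Ustar) i
    simp only [Pi.sub_apply, Real.norm_eq_abs] at h1
    rw [hC]
    have := abs_nonneg (U 0 i - Ustar i)
    have := neg_abs_le (U 0 i - Ustar i)
    linarith
  -- Part 3 : main induction
  have hmain : ∀ k, ∀ i, TGS (U k) i - U k i ≤ auxM γ k * C + β k * (Ustar i - U 0 i) := by
    intro k
    induction k with
    | zero =>
      intro i
      have hT0 : TGS (U 0) ≤ Ustar := by rw [← hfix]; exact hmono _ _ hstar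
      have hM0 : auxM γ 0 = 0 := by simp [auxM]
      have hB0 : β 0 = 1 := by rw [hβ]; norm_num
      rw [hM0, hB0]
      have := hT0 i
      linarith
    | succ k ih =>
      obtain ⟨P, hP0, hPr, hPle⟩ := hlin (β (k+1)) (hBpos (k+1)).le (hBle1 (k+1)) (U (k+1)) (U k)
      intro i
      have hv : ∀ j, (U (k+1) - (1 - β (k+1)) • U k - β (k+1) • Ustar) j
          = (1 - β (k+1)) * (TGS (U k) j - U k j) - β (k+1) * (Ustar j - U 0 j) := by
        intro j
        simp only [hU k, Pi.sub_apply, Pi.add_apply, Pi.smul_apply, smul_eq_mul]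
        ring
      have hple_i := hPle i
      simp only [Pi.sub_apply, Pi.smul_apply, smul_eq_mul] at hple_i
      have hmv : P.mulVec (U (k+1) - (1 - β (k+1)) • U k - β (k+1) • Ustar) i
          = ∑ j, P i j * ((1 - β (k+1)) * (TGS (U k) j - U k j)
              - β (k+1) * (Ustar j - U 0 j)) := by
        simp only [Matrix.mulVec, dotProduct]
        exact Finset.sum_congr rfl fun j _ => by rw [hv j]
      rw [hmv] at hple_i
      set b := β (k+1) with hbdef
      set bk := β k with hbkdef
      set m := auxM γ k with hmdef
      set S := ∑ j, P i j * (Ustar j - U 0 j) with hSdef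
      set A := ∑ j, P i j * (TGS (U k) j - U k j) with hAdef
      have hsplit : ∑ j, P i j * ((1 - b) * (TGS (U k) j - U k j) - b * (Ustar j - U 0 j))
          = (1 - b) * A - b * S := by
        rw [hAdef, hSdef, Finset.mul_sum, Finset.mul_sum, ← Finset.sum_sub_distrib]
        exact Finset.sum_congr rfl fun j _ => by ring
      rw [hsplit] at hple_i
      have hrow := hPr i
      have hm0 : 0 ≤ m := by rw [hmdef]; exact hMnn k
      have hAle : A ≤ γ * (m * C) + bk * S := by
        have h1 : A ≤ ∑ j, P i j * (m * C + bk * (Ustar j - U 0 j)) := by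
          rw [hAdef]
          exact Finset.sum_le_sum fun j _ => mul_le_mul_of_nonneg_left (ih j) (hP0 i j)
        have h2 : ∑ j, P i j * (m * C + bk * (Ustar j - U 0 j))
            = (∑ j, P i j) * (m * C) + bk * S := by
          rw [hSdef, Finset.mul_sum, Finset.sum_mul, ← Finset.sum_add_distrib]
          exact Finset.sum_congr rfl fun j _ => by ring
        have h3 : (∑ j, P i j) * (m * C) ≤ γ * (m * C) :=
          mul_le_mul_of_nonneg_right hrow (mul_nonneg hm0 hCnn)
        linarith
      have hSle : S ≤ γ * C := by
        have h1 : S ≤ ∑ j, P i j * C := by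
          rw [hSdef]
          exact Finset.sum_le_sum fun j _ => mul_le_mul_of_nonneg_left (hwC j) (hP0 i j)
        have h2 : ∑ j, P i j * C = (∑ j, P i j) * C := by rw [Finset.sum_mul]
        have h3 : (∑ j, P i j) * C ≤ γ * C := mul_le_mul_of_nonneg_right hrow hCnn
        linarith
      have h1b : (0:ℝ) ≤ 1 - b := by have := hBle1 (k+1); rw [← hbdef] at this; linarith
      have hc := hcnn k
      rw [← hbdef, ← hbkdef] at hc
      have hmul1 : (1 - b) * A ≤ (1 - b) * (γ * (m * C) + bk * S) :=
        mul_le_mul_of_nonneg_left hAle h1b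
      have hmul2 : ((1 - b) * bk - b) * S ≤ ((1 - b) * bk - b) * (γ * C) :=
        mul_le_mul_of_nonneg_left hSle hc
      have hfixi : TGS Ustar i = Ustar i := by rw [hfix]
      have hUi : U (k+1) i = b * U 0 i + (1 - b) * TGS (U k) i := by
        rw [hU k]; simp only [Pi.add_apply, Pi.smul_apply, smul_eq_mul]; rfl
      have hreck := hrec k
      rw [← hbdef, ← hbkdef, ← hmdef] at hreck
      rw [hreck]
      -- goal : TGS (U (k+1)) i - U (k+1) i ≤ (γ*(1-b)*m + γ*((1-b)*bk - b)) * C + b * (Ustar i - U 0 i)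
      have hexp1 : (1 - b) * (γ * (m * C) + bk * S) = γ * (1-b) * m * C + (1-b) * bk * S := by ring
      have hexp2 : ((1 - b) * bk - b) * S = (1-b) * bk * S - b * S := by ring
      have hexp3 : ((1 - b) * bk - b) * (γ * C) = γ * ((1-b)*bk - b) * C := by ring
      nlinarith [hple_i, hmul1, hmul2]
  -- conclusion
  refine ⟨hstar, fun k => ?_⟩
  have hR := (aux_facts hγ0 hγ1 k).2.2.2.2.2.1
  rw [← hR]
  have hBk := hBpos k
  have hMk := hMnn k
  have hbound : 0 ≤ (auxM γ k + auxB γ k) * C :=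
    mul_nonneg (add_nonneg (hMnn k) (aux_facts hγ0 hγ1 k).1.le) hCnn
  refine (pi_norm_le_iff_of_nonneg hbound).mpr fun i => ?_
  rw [Pi.sub_apply, Real.norm_eq_abs, abs_le]
  constructor
  · have := (hkey k).2.1 i
    linarith
  · have h1 := hmain k i
    have h2 := hwC i
    have h3 := hw i
    have hBk' := hβc k
    nlinarith [mul_le_mul_of_nonneg_left h2 hBk.le]
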